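/- For every N ≥ 0 and every multi-index γ there is a constant C such that for all j ≥ 1, all l ∈ ℤⁿ with 2^j ≤ l_i ≤ 2^{j+1} for each i, and all x ∈ ℝⁿ with |x - (3/2)·(1,…,1)|² ≥ 4n, one has |x - (3/2)·(1,…,1)|^{2N} · |(2^j x - l)^γ| · exp(-|2^j x - l|²) ≤ C · 2^{-j(2N+n+2)}. -/

import Mathlib

open Real

lemma pow_le_factorial_mul_exp' (M : ℕ) {x : ℝ} (hx : 0 ≤ x) :
    x ^ M ≤ (M.factorial : ℝ) * Real.exp x := by
  have hM : (0:ℝ) < M.factorial := by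
    exact_mod_cast M.factorial_pos
  have h1 : x ^ M / M.factorial ≤ Real.exp x := by
    calc x ^ M / M.factorial
        ≤ ∑ i ∈ Finset.range (M+1), x ^ i / i.factorial := by
          refine Finset.single_le_sum (f := fun i => x ^ i / (i.factorial : ℝ)) ?_ ?_
          · intro i _; positivity
          · simp
      _ ≤ Real.exp x := Real.sum_le_exp_of_nonneg hx _
  calc x ^ M = (x ^ M / M.factorial) * M.factorial := by field_simp
    _ ≤ Real.exp x * M.factorial := by
        exact mul_le_mul_of_nonneg_right h1 hM.le
    _ = M.factorial * Real.exp x := by ring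

theorem schwartz_decay_estimate (n : ℕ) (hn : 1 ≤ n) (N : ℕ) (γ : Fin n → ℕ) :
    ∃ C : ℝ, ∀ j : ℕ, 1 ≤ j → ∀ l : Fin n → ℤ,
      (∀ i, (2 : ℤ) ^ j ≤ l i ∧ l i ≤ 2 ^ (j + 1)) →
      ∀ x : Fin n → ℝ, 4 * (n : ℝ) ≤ ∑ i, (x i - 3 / 2) ^ 2 →
        (∑ i, (x i - 3 / 2) ^ 2) ^ N *
            |∏ i, ((2 : ℝ) ^ j * x i - (l i : ℝ)) ^ (γ i)| *
            Real.exp (-(∑ i, ((2 : ℝ) ^ j * x i - (l i : ℝ)) ^ 2)) ≤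
          C * (2 : ℝ) ^ (-((j : ℤ) * (2 * N + n + 2))) := by
  classical
  set G : ℕ := ∑ i, γ i with hG
  set M : ℕ := N + G with hM
  set K : ℕ := n + 2 with hK
  refine ⟨(16/7 : ℝ) ^ N * Real.exp (1/2) * 2 ^ M * M.factorial *
      K.factorial * (8/7 : ℝ) ^ K, ?_⟩
  intro j hj l hl x hx
  set p : ℝ := (2 : ℝ) ^ j with hp
  have hp0 : 0 < p := by positivity
  set S : ℝ := ∑ i, (x i - 3 / 2) ^ 2 with hS
  set T : ℝ := ∑ i, ((2 : ℝ) ^ j * x i - (l i : ℝ)) ^ 2 with hT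
  have hS0 : 0 ≤ S := Finset.sum_nonneg fun i _ => sq_nonneg _
  have hT0 : 0 ≤ T := Finset.sum_nonneg fun i _ => sq_nonneg _
  have hn1 : (1 : ℝ) ≤ n := by exact_mod_cast hn
  -- per-coordinate bound
  have key : ∀ i, p ^ 2 * (x i - 3/2) ^ 2 ≤ 2 * (p * x i - (l i : ℝ)) ^ 2 + p ^ 2 / 2 := by
    intro i
    obtain ⟨h1, h2⟩ := hl i
    have h1' : p ≤ (l i : ℝ) := by
      rw [hp]; exact_mod_cast h1
    have h2' : (l i : ℝ) ≤ 2 * p := by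
      have h2'' : (l i : ℝ) ≤ (2:ℝ) ^ (j+1) := by exact_mod_cast h2
      calc (l i : ℝ) ≤ (2:ℝ)^(j+1) := h2''
        _ = 2 * p := by rw [hp, pow_succ]; ring
    nlinarith [sq_nonneg (p * x i - (l i : ℝ) - ((l i : ℝ) - 3*p/2)),
      mul_nonneg (by linarith : (0:ℝ) ≤ (l i : ℝ) - p) (by linarith : (0:ℝ) ≤ 2*p - (l i : ℝ))]
  have hsum : p ^ 2 * S ≤ 2 * T + (n : ℝ) * (p ^ 2 / 2) := by
    have : ∑ i, p ^ 2 * (x i - 3/2) ^ 2 ≤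
        ∑ i, (2 * (p * x i - (l i : ℝ)) ^ 2 + p ^ 2 / 2) :=
      Finset.sum_le_sum fun i _ => key i
    rw [Finset.sum_add_distrib, ← Finset.mul_sum, ← Finset.mul_sum] at this
    simpa [hS, hT, hp, Finset.sum_const, Finset.card_univ, mul_comm] using this
  -- T is large
  have hTbig : 7/16 * (p ^ 2 * S) ≤ T := by nlinarith [sq_nonneg p, mul_le_mul_of_nonneg_left hx (sq_nonneg p)]
  have hT2 : 7/8 * p ^ 2 ≤ T / 2 := by nlinarith [sq_nonneg p, mul_le_mul_of_nonneg_left hx (sq_nonneg p)]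
  have hT2pos : 0 < T / 2 := lt_of_lt_of_le (by positivity) hT2
  -- bound on S
  have hSle : S ≤ 16/7 * T / p ^ 2 := by
    rw [le_div_iff₀ (by positivity : (0:ℝ) < p ^ 2)]
    nlinarith
  -- bound on the product
  have hd : ∀ i, |p * x i - (l i : ℝ)| ≤ 1 + T := by
    intro i
    have h1 : (p * x i - (l i : ℝ)) ^ 2 ≤ T := by
      refine Finset.single_le_sum (f := fun i => ((2:ℝ) ^ j * x i - (l i : ℝ)) ^ 2)
        (fun i _ => sq_nonneg _) (Finset.mem_univ i)
    have h2 : |p * x i - (l i : ℝ)| ^ 2 = (p * x i - (l i : ℝ)) ^ 2 := sq_abs _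
    nlinarith [abs_nonneg (p * x i - (l i : ℝ)), sq_nonneg (|p * x i - (l i : ℝ)| - 1)]
  have hprod : |∏ i, ((2 : ℝ) ^ j * x i - (l i : ℝ)) ^ (γ i)| ≤ (1 + T) ^ G := by
    rw [Finset.abs_prod]
    calc ∏ i, |((2:ℝ) ^ j * x i - (l i : ℝ)) ^ (γ i)|
        = ∏ i, |p * x i - (l i : ℝ)| ^ (γ i) := by
          simp [abs_pow, hp]
      _ ≤ ∏ i, (1 + T) ^ (γ i) := by
          refine Finset.prod_le_prod (fun i _ => by positivity) ?_
          intro i _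
          exact pow_le_pow_left₀ (abs_nonneg _) (hd i) _
      _ = (1 + T) ^ G := by
          rw [Finset.prod_pow_eq_pow_sum]
  -- exp bounds
  have h1T : (0:ℝ) ≤ 1 + T := by linarith
  have hA : (1 + T) ^ M * Real.exp (-(T/2)) ≤ Real.exp (1/2) * 2 ^ M * M.factorial := by
    have h := pow_le_factorial_mul_exp' M (x := (1+T)/2) (by linarith)
    have h2 : (1 + T) ^ M ≤ 2 ^ M * (M.factorial : ℝ) * Real.exp ((1+T)/2) := by
      have : (1 + T) ^ M = 2 ^ M * ((1+T)/2) ^ M := by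
        rw [← mul_pow]; ring_nf
      rw [this]
      calc (2:ℝ) ^ M * ((1+T)/2) ^ M ≤ 2 ^ M * ((M.factorial : ℝ) * Real.exp ((1+T)/2)) := by
            exact mul_le_mul_of_nonneg_left h (by positivity)
        _ = 2 ^ M * (M.factorial : ℝ) * Real.exp ((1+T)/2) := by ring
    calc (1 + T) ^ M * Real.exp (-(T/2))
        ≤ 2 ^ M * (M.factorial : ℝ) * Real.exp ((1+T)/2) * Real.exp (-(T/2)) := by
          exact mul_le_mul_of_nonneg_right h2 (Real.exp_nonneg _)
      _ = Real.exp (1/2) * 2 ^ M * M.factorial := by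
          rw [mul_assoc, ← Real.exp_add]
          ring_nf
  have hB : Real.exp (-(T/2)) ≤ (K.factorial : ℝ) * (8/7) ^ K / (p ^ 2) ^ K := by
    have h := pow_le_factorial_mul_exp' K (x := T/2) (by linarith)
    have hTK : ((7:ℝ)/8 * p ^ 2) ^ K ≤ (T/2) ^ K := pow_le_pow_left₀ (by positivity) hT2 _
    have hexp : ((7:ℝ)/8 * p ^ 2) ^ K * Real.exp (-(T/2)) ≤ K.factorial := by
      calc ((7:ℝ)/8 * p ^ 2) ^ K * Real.exp (-(T/2))
          ≤ (T/2) ^ K * Real.exp (-(T/2)) := by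
            exact mul_le_mul_of_nonneg_right hTK (Real.exp_nonneg _)
        _ ≤ (K.factorial : ℝ) * Real.exp (T/2) * Real.exp (-(T/2)) := by
            exact mul_le_mul_of_nonneg_right h (Real.exp_nonneg _)
        _ = K.factorial := by rw [mul_assoc, ← Real.exp_add]; simp
    rw [le_div_iff₀ (by positivity : (0:ℝ) < (p ^ 2) ^ K)]
    have hone : ((7:ℝ)/8) ^ K * (8/7 : ℝ) ^ K = 1 := by
      rw [← mul_pow]; norm_num
    calc Real.exp (-(T/2)) * (p ^ 2) ^ K
        = ((7:ℝ)/8 * p ^ 2) ^ K * Real.exp (-(T/2)) * (8/7) ^ K := by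
          rw [mul_pow]
          linear_combination (-(Real.exp (-(T/2)) * (p ^ 2) ^ K)) * hone
      _ ≤ (K.factorial : ℝ) * (8/7) ^ K := by
          exact mul_le_mul_of_nonneg_right hexp (by positivity)
  -- combine
  have hexpsplit : Real.exp (-T) = Real.exp (-(T/2)) * Real.exp (-(T/2)) := by
    rw [← Real.exp_add]; ring_nf
  have main : S ^ N * |∏ i, ((2 : ℝ) ^ j * x i - (l i : ℝ)) ^ (γ i)| * Real.exp (-T) ≤
      ((16/7 : ℝ) ^ N * Real.exp (1/2) * 2 ^ M * M.factorial * K.factorial * (8/7) ^ K) /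
        ((p ^ 2) ^ N * (p ^ 2) ^ K) := by
    calc S ^ N * |∏ i, ((2 : ℝ) ^ j * x i - (l i : ℝ)) ^ (γ i)| * Real.exp (-T)
        ≤ (16/7 * T / p ^ 2) ^ N * (1 + T) ^ G * Real.exp (-T) := by
          refine mul_le_mul_of_nonneg_right ?_ (Real.exp_nonneg _)
          exact mul_le_mul (pow_le_pow_left₀ hS0 hSle _) hprod (abs_nonneg _) (by positivity)
      _ = (16/7 : ℝ) ^ N / (p ^ 2) ^ N * (T ^ N * (1 + T) ^ G * Real.exp (-T)) := by
          rw [div_pow, mul_pow]; ring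
      _ ≤ (16/7 : ℝ) ^ N / (p ^ 2) ^ N * ((1 + T) ^ M * Real.exp (-T)) := by
          refine mul_le_mul_of_nonneg_left ?_ (by positivity)
          refine mul_le_mul_of_nonneg_right ?_ (Real.exp_nonneg _)
          rw [hM, pow_add]
          exact mul_le_mul_of_nonneg_right (pow_le_pow_left₀ hT0 (by linarith) _) (by positivity)
      _ = (16/7 : ℝ) ^ N / (p ^ 2) ^ N *
            ((1 + T) ^ M * Real.exp (-(T/2)) * Real.exp (-(T/2))) := by
          rw [hexpsplit]; ring
      _ ≤ (16/7 : ℝ) ^ N / (p ^ 2) ^ N *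
            ((Real.exp (1/2) * 2 ^ M * M.factorial) *
              ((K.factorial : ℝ) * (8/7) ^ K / (p ^ 2) ^ K)) := by
          refine mul_le_mul_of_nonneg_left ?_ (by positivity)
          exact mul_le_mul hA hB (Real.exp_nonneg _) (by positivity)
      _ = ((16/7 : ℝ) ^ N * Real.exp (1/2) * 2 ^ M * M.factorial * K.factorial * (8/7) ^ K) /
            ((p ^ 2) ^ N * (p ^ 2) ^ K) := by
          simp only [div_eq_mul_inv, mul_inv]
          ring
  refine le_trans main ?_
  -- compare powers of 2
  have hpow : ((p ^ 2) ^ N * (p ^ 2) ^ K : ℝ) = (2:ℝ) ^ ((j * (2*N + 2*K) : ℕ) : ℤ) := by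
    rw [zpow_natCast, ← pow_mul p 2 N, ← pow_mul p 2 K, ← pow_add, hp,
      ← pow_mul 2 j (2*N + 2*K)]
  have hC0 : (0:ℝ) ≤ (16/7 : ℝ) ^ N * Real.exp (1/2) * 2 ^ M * M.factorial *
      K.factorial * (8/7) ^ K := by positivity
  rw [div_eq_mul_inv, hpow, ← zpow_neg]
  refine mul_le_mul_of_nonneg_left ?_ hC0
  refine zpow_le_zpow_right₀ (by norm_num) ?_
  have : j * (2*N + n + 2) ≤ j * (2*N + 2*K) := by
    refine Nat.mul_le_mul_left _ ?_
    omega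
  have h2 : (j : ℤ) * (2 * N + n + 2) ≤ ((j * (2*N + 2*K) : ℕ) : ℤ) := by
    push_cast
    exact_mod_cast this
  exact neg_le_neg h2
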